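/- Suppose a nonnegative differentiable function E(t) satisfies, for all t ≥ 0: E'(t) + (3/(1+t)) E(t) ≤ (3/(1+t)) [ C(1+t)^{-1} + C(1+t)^{-1} ∫₀ᵗ E(s)² ds ] and additionally E(t) ≤ C₀(1+t)^{-2/3}. Then there exists C' > 0 with E(t) ≤ C' (1+t)^{-1} for all t ≥ 0. -/

import Mathlib

open MeasureTheory Real

/-- 2D bootstrap step: if `E' + (3/(1+t))E ≤ (3/(1+t))[C(1+t)^{-1} + C(1+t)^{-1}∫₀ᵗ E²]`
and `E(t) ≤ C₀(1+t)^{-2/3}`, then `E(t) ≤ C'(1+t)^{-1}`. -/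
theorem bootstrap_2d (C C₀ : ℝ) (hC : 0 < C) (hC₀ : 0 < C₀)
    (E E' : ℝ → ℝ) (hEn : ∀ t, 0 ≤ t → 0 ≤ E t)
    (hderiv : ∀ t, 0 ≤ t → HasDerivAt E (E' t) t)
    (hineq : ∀ t, 0 ≤ t →
      E' t + (3 / (1 + t)) * E t ≤
        (3 / (1 + t)) * (C * (1 + t) ^ (-1 : ℝ) +
          C * (1 + t) ^ (-1 : ℝ) * ∫ s in (0:ℝ)..t, (E s) ^ 2))
    (hprelim : ∀ t, 0 ≤ t → E t ≤ C₀ * (1 + t) ^ (-(2:ℝ)/3)) :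
    ∃ C' : ℝ, 0 < C' ∧ ∀ t, 0 ≤ t → E t ≤ C' * (1 + t) ^ (-1 : ℝ) := by
  set K : ℝ := 3 * C * (1 + 3 * C₀ ^ 2) with hK
  have hKpos : 0 < K := by positivity
  have hEcont : ContinuousOn E (Set.Ici 0) := fun s hs =>
    (hderiv s hs).continuousAt.continuousWithinAt
  -- integral bound
  have Ibound : ∀ t, 0 ≤ t → (∫ s in (0:ℝ)..t, (E s) ^ 2) ≤ 3 * C₀ ^ 2 := by
    intro t ht
    have hIcc : Set.Icc (0:ℝ) t ⊆ Set.Ici 0 := fun s hs => hs.1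
    have hint1 : IntervalIntegrable (fun s => (E s) ^ 2) volume 0 t :=
      (((hEcont.mono hIcc).pow 2)).intervalIntegrable_of_Icc ht
    have hcontg : ContinuousOn (fun s : ℝ => (1 + s) ^ (-(4:ℝ)/3)) (Set.Icc 0 t) := by
      apply ContinuousOn.rpow_const (by fun_prop)
      intro s hs
      left
      have : (0:ℝ) < 1 + s := by linarith [hs.1]
      exact ne_of_gt this
    have hint2 : IntervalIntegrable (fun s : ℝ => C₀ ^ 2 * (1 + s) ^ (-(4:ℝ)/3)) volume 0 t :=
      (continuousOn_const.mul hcontg).intervalIntegrable_of_Icc ht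
    have hmono : (∫ s in (0:ℝ)..t, (E s) ^ 2) ≤
        ∫ s in (0:ℝ)..t, C₀ ^ 2 * (1 + s) ^ (-(4:ℝ)/3) := by
      apply intervalIntegral.integral_mono_on ht hint1 hint2
      intro s hs
      have h0s : (0:ℝ) ≤ s := hs.1
      have h1s : (0:ℝ) < 1 + s := by linarith
      have hE := hprelim s h0s
      have h0 := hEn s h0s
      have hsq : (E s) ^ 2 ≤ (C₀ * (1 + s) ^ (-(2:ℝ)/3)) ^ 2 := by
        exact pow_le_pow_left₀ h0 hE 2
      calc (E s) ^ 2 ≤ (C₀ * (1 + s) ^ (-(2:ℝ)/3)) ^ 2 := hsq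
        _ = C₀ ^ 2 * (1 + s) ^ (-(4:ℝ)/3) := by
            rw [mul_pow, ← Real.rpow_natCast ((1 + s) ^ (-(2:ℝ)/3)) 2,
              ← Real.rpow_mul h1s.le]
            norm_num
    have hant : ∀ s ∈ Set.uIcc (0:ℝ) t,
        HasDerivAt (fun u : ℝ => -3 * (1 + u) ^ (-(1:ℝ)/3)) ((1 + s) ^ (-(4:ℝ)/3)) s := by
      intro s hs
      rw [Set.uIcc_of_le ht] at hs
      have h1s : (0:ℝ) < 1 + s := by linarith [hs.1]
      have h1 : HasDerivAt (fun u : ℝ => (1 + u) ^ (-(1:ℝ)/3))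
          ((-(1:ℝ)/3) * (1 + s) ^ (-(1:ℝ)/3 - 1) * 1) s := by
        exact (Real.hasDerivAt_rpow_const (p := -(1:ℝ)/3) (Or.inl h1s.ne')).comp s
          ((hasDerivAt_id s).const_add 1)
      have h2 := h1.const_mul (-3 : ℝ)
      refine h2.congr_deriv ?_
      have : (-(1:ℝ)/3 - 1) = (-(4:ℝ)/3) := by norm_num
      rw [this]
      ring
    have hintg' : IntervalIntegrable (fun s : ℝ => (1 + s) ^ (-(4:ℝ)/3)) volume 0 t :=
      hcontg.intervalIntegrable_of_Icc ht
    have hcalc := intervalIntegral.integral_eq_sub_of_hasDerivAt hant hintg'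
    have hval : (∫ s in (0:ℝ)..t, (1 + s) ^ (-(4:ℝ)/3)) = 3 - 3 * (1 + t) ^ (-(1:ℝ)/3) := by
      rw [hcalc]
      norm_num
      ring
    have hle3 : (∫ s in (0:ℝ)..t, (1 + s) ^ (-(4:ℝ)/3)) ≤ 3 := by
      rw [hval]
      have : (0:ℝ) ≤ (1 + t) ^ (-(1:ℝ)/3) := Real.rpow_nonneg (by linarith) _
      linarith
    calc (∫ s in (0:ℝ)..t, (E s) ^ 2) ≤ ∫ s in (0:ℝ)..t, C₀ ^ 2 * (1 + s) ^ (-(4:ℝ)/3) := hmono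
      _ = C₀ ^ 2 * ∫ s in (0:ℝ)..t, (1 + s) ^ (-(4:ℝ)/3) := by
          rw [intervalIntegral.integral_const_mul]
      _ ≤ C₀ ^ 2 * 3 := by
          apply mul_le_mul_of_nonneg_left hle3 (by positivity)
      _ = 3 * C₀ ^ 2 := by ring
  -- the auxiliary function
  set H : ℝ → ℝ := fun u => (1 + u) ^ 3 * E u - K / 2 * (1 + u) ^ 2 with hHdef
  have hHd : ∀ x, 0 ≤ x → HasDerivAt H
      (3 * (1 + x) ^ 2 * E x + (1 + x) ^ 3 * E' x - K / 2 * (2 * (1 + x))) x := by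
    intro x hx
    have ha : HasDerivAt (fun u : ℝ => (1 + u) ^ 3) (3 * (1 + x) ^ 2) x := by
      exact (((hasDerivAt_id x).const_add 1).pow 3).congr_deriv (by norm_num)
    have hb := ha.mul (hderiv x hx)
    have hc : HasDerivAt (fun u : ℝ => K / 2 * (1 + u) ^ 2) (K / 2 * (2 * (1 + x))) x := by
      have := (((hasDerivAt_id x).const_add 1).pow 2).const_mul (K / 2)
      simpa using this
    have := hb.sub hc
    exact this.congr_deriv (by ring)
  -- deriv H ≤ 0 on interior
  have hderivH : ∀ x ∈ interior (Set.Ici (0:ℝ)), deriv H x ≤ 0 := by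
    intro x hx
    rw [interior_Ici] at hx
    have hx0 : (0:ℝ) < x := hx
    have h1x : (0:ℝ) < 1 + x := by linarith
    have hd := hHd x hx0.le
    rw [hd.deriv]
    have hI := Ibound x hx0.le
    have hIn : (0:ℝ) ≤ ∫ s in (0:ℝ)..x, (E s) ^ 2 := by
      apply intervalIntegral.integral_nonneg hx0.le
      intro s hs
      positivity
    have hin := hineq x hx0.le
    rw [Real.rpow_neg_one] at hin
    have hinv : (0:ℝ) < (1 + x)⁻¹ := inv_pos.mpr h1x
    have h2 : E' x + 3 / (1 + x) * E x ≤ K / (1 + x) ^ 2 := by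
      have hb1 : C * (1 + x)⁻¹ + C * (1 + x)⁻¹ * (∫ s in (0:ℝ)..x, (E s) ^ 2)
          ≤ C * (1 + x)⁻¹ * (1 + 3 * C₀ ^ 2) := by
        nlinarith [mul_le_mul_of_nonneg_left hI (show (0:ℝ) ≤ C * (1 + x)⁻¹ by positivity)]
      have hb2 : (3 / (1 + x)) * (C * (1 + x)⁻¹ + C * (1 + x)⁻¹ * ∫ s in (0:ℝ)..x, (E s) ^ 2)
          ≤ (3 / (1 + x)) * (C * (1 + x)⁻¹ * (1 + 3 * C₀ ^ 2)) := by
        apply mul_le_mul_of_nonneg_left hb1 (by positivity)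
      have heq : (3 / (1 + x)) * (C * (1 + x)⁻¹ * (1 + 3 * C₀ ^ 2)) = K / (1 + x) ^ 2 := by
        rw [hK]; field_simp
      linarith [hin.trans hb2, heq.le, heq.ge]
    have h3 : (1 + x) ^ 3 * (E' x + 3 / (1 + x) * E x) ≤ (1 + x) ^ 3 * (K / (1 + x) ^ 2) :=
      mul_le_mul_of_nonneg_left h2 (by positivity)
    have h4 : (1 + x) ^ 3 * (E' x + 3 / (1 + x) * E x)
        = (1 + x) ^ 3 * E' x + 3 * (1 + x) ^ 2 * E x := by field_simp
    have h5 : (1 + x) ^ 3 * (K / (1 + x) ^ 2) = K * (1 + x) := by field_simp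
    linarith
  have hHanti : AntitoneOn H (Set.Ici 0) := by
    apply antitoneOn_of_deriv_nonpos (convex_Ici 0)
    · intro x hx
      exact (hHd x hx).continuousAt.continuousWithinAt
    · intro x hx
      rw [interior_Ici] at hx
      exact (hHd x (le_of_lt hx)).differentiableAt.differentiableWithinAt
    · exact hderivH
  refine ⟨C₀ + K / 2, by positivity, ?_⟩
  intro t ht
  have h1t : (0:ℝ) < 1 + t := by linarith
  have hHt : H t ≤ H 0 := hHanti (Set.self_mem_Ici) ht ht
  have hE0 : E 0 ≤ C₀ := by
    have := hprelim 0 le_rfl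
    simpa using this
  have hH0 : H 0 = E 0 - K / 2 := by simp [hHdef]
  have hkey : (1 + t) ^ 3 * E t ≤ (C₀ + K / 2) * (1 + t) ^ 2 := by
    have hHt' : (1 + t) ^ 3 * E t - K / 2 * (1 + t) ^ 2 ≤ E 0 - K / 2 := by
      rw [← hH0]; exact hHt
    nlinarith [sq_nonneg t, sq_nonneg (1 + t), hKpos]
  rw [Real.rpow_neg_one, ← div_eq_mul_inv, le_div_iff₀ h1t]
  nlinarith [mul_pos h1t h1t, hEn t ht]
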